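/- For m ≥ 2 and n ≥ 1, set k = n(m−1) + 1. Then the coefficient p_k = (1/k)·((m−1)/m)^k·(1/m)^n·C(mn, n) satisfies p_k ≤ 1 for all n, and p_k > 0; moreover the generating function g(x) = ∑_n p_{n(m−1)+1} x^{n(m−1)+1} has radius of convergence exactly 1. -/

import Mathlib

open Finset Filter

lemma binom_term_bounds (m n : ℕ) (hm : 2 ≤ m) :
    (Nat.choose (m * n) n : ℝ) * (1 / m) ^ n * (((m : ℝ) - 1) / m) ^ (m * n - n) ≤ 1 ∧
    1 ≤ ((m * n : ℕ) + 1 : ℝ) *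
      ((Nat.choose (m * n) n : ℝ) * (1 / m) ^ n * (((m : ℝ) - 1) / m) ^ (m * n - n)) := by
  have hm0 : (0:ℝ) < m := by positivity
  have hm1 : (1:ℝ) ≤ (m:ℝ) - 1 := by
    have : (2:ℝ) ≤ m := by exact_mod_cast hm
    linarith
  set N := m * n with hN
  set pr : ℝ := 1 / m with hpr
  set q : ℝ := ((m:ℝ) - 1) / m with hq
  have hpr0 : 0 < pr := by positivity
  have hq0 : 0 < q := by rw [hq]; positivity
  have hpq : pr + q = 1 := by rw [hpr, hq]; field_simp; ring
  have hnN : n ≤ N := by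
    rw [hN]; nlinarith [Nat.le_mul_of_pos_left n (show 0 < m by omega)]
  set f : ℕ → ℝ := fun k => (N.choose k : ℝ) * pr ^ k * q ^ (N - k) with hf
  have hf0 : ∀ k, 0 ≤ f k := by
    intro k
    have : (0:ℝ) ≤ (N.choose k : ℝ) := by positivity
    positivity
  -- ascending part
  have claim1 : ∀ k, k + 1 ≤ n → f k ≤ f (k + 1) := by
    intro k hk
    have hk1N : k + 1 ≤ N := hk.trans hnN
    -- Nat inequality: (m-1)*(k+1) ≤ N - k
    have hA : (m - 1) * (k + 1) ≤ N - k := by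
      have h1 : m * (k + 1) ≤ m * n := Nat.mul_le_mul_left m hk
      have h2 : (m - 1) * (k + 1) = m * (k + 1) - (k + 1) := by
        rw [Nat.sub_one_mul]
      have h3 : k + 1 ≤ m * (k + 1) := Nat.le_mul_of_pos_left _ (by omega)
      omega
    have hcpos : 0 < N.choose k := Nat.choose_pos (by omega)
    have hC : N.choose k * (m - 1) ≤ N.choose (k + 1) := by
      have hr := Nat.choose_succ_right_eq N k
      have h1 : N.choose k * ((m - 1) * (k + 1)) ≤ N.choose k * (N - k) :=
        Nat.mul_le_mul_left _ hA
      have h2 : N.choose k * (m - 1) * (k + 1) ≤ N.choose (k + 1) * (k + 1) := by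
        calc N.choose k * (m - 1) * (k + 1) = N.choose k * ((m - 1) * (k + 1)) := by ring
          _ ≤ N.choose k * (N - k) := h1
          _ = N.choose (k + 1) * (k + 1) := hr.symm
      exact Nat.le_of_mul_le_mul_right h2 (by omega)
    have keyR : (N.choose k : ℝ) * q ≤ (N.choose (k + 1) : ℝ) * pr := by
      have hCr : (N.choose k : ℝ) * ((m:ℝ) - 1) ≤ (N.choose (k + 1) : ℝ) := by
        have := hC
        have h := (Nat.cast_le (α := ℝ)).2 this
        push_cast at h
        have hcast : ((m - 1 : ℕ) : ℝ) = (m:ℝ) - 1 := by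
          have : 1 ≤ m := by omega
          push_cast [this]; ring
        rw [hcast] at h
        linarith
      have e2 : (N.choose k : ℝ) * q = ((N.choose k : ℝ) * ((m:ℝ) - 1)) / m := by
        rw [hq]; ring
      have e3 : (N.choose (k + 1) : ℝ) * pr = (N.choose (k + 1) : ℝ) / m := by
        rw [hpr]; ring
      rw [e2, e3, div_le_div_iff₀ hm0 hm0]
      nlinarith [mul_le_mul_of_nonneg_right hCr (le_of_lt hm0)]
    have e : N - k = (N - (k + 1)) + 1 := by omega
    have e1 : f k = (N.choose k : ℝ) * q * (pr ^ k * q ^ (N - (k + 1))) := by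
      rw [hf]; simp only; rw [e, pow_succ]; ring
    have e2 : f (k + 1) = (N.choose (k + 1) : ℝ) * pr * (pr ^ k * q ^ (N - (k + 1))) := by
      rw [hf]; simp only; rw [pow_succ]; ring
    rw [e1, e2]
    exact mul_le_mul_of_nonneg_right keyR (by positivity)
  -- descending part
  have claim2 : ∀ k, n ≤ k → f (k + 1) ≤ f k := by
    intro k hk
    by_cases hkN : k < N
    · have hA : N - k ≤ (m - 1) * (k + 1) := by
        have h1 : m * n ≤ m * k := Nat.mul_le_mul_left m hk
        have h2 : (m - 1) * (k + 1) = m * (k + 1) - (k + 1) := by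
          rw [Nat.sub_one_mul]
        have h3 : m * (k + 1) = m * k + m := by ring
        omega
      have hC : N.choose (k + 1) ≤ N.choose k * (m - 1) := by
        have hr := Nat.choose_succ_right_eq N k
        have h1 : N.choose k * (N - k) ≤ N.choose k * ((m - 1) * (k + 1)) :=
          Nat.mul_le_mul_left _ hA
        have h2 : N.choose (k + 1) * (k + 1) ≤ N.choose k * (m - 1) * (k + 1) := by
          calc N.choose (k + 1) * (k + 1) = N.choose k * (N - k) := hr
            _ ≤ N.choose k * ((m - 1) * (k + 1)) := h1
            _ = N.choose k * (m - 1) * (k + 1) := by ring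
        exact Nat.le_of_mul_le_mul_right h2 (by omega)
      have keyR : (N.choose (k + 1) : ℝ) * pr ≤ (N.choose k : ℝ) * q := by
        have hCr : (N.choose (k + 1) : ℝ) ≤ (N.choose k : ℝ) * ((m:ℝ) - 1) := by
          have h := (Nat.cast_le (α := ℝ)).2 hC
          push_cast at h
          have hcast : ((m - 1 : ℕ) : ℝ) = (m:ℝ) - 1 := by
            have : 1 ≤ m := by omega
            push_cast [this]; ring
          rw [hcast] at h
          linarith
        have e2 : (N.choose k : ℝ) * q = ((N.choose k : ℝ) * ((m:ℝ) - 1)) / m := by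
          rw [hq]; ring
        have e3 : (N.choose (k + 1) : ℝ) * pr = (N.choose (k + 1) : ℝ) / m := by
          rw [hpr]; ring
        rw [e2, e3, div_le_div_iff₀ hm0 hm0]
        nlinarith [mul_le_mul_of_nonneg_right hCr (le_of_lt hm0)]
      have e : N - k = (N - (k + 1)) + 1 := by omega
      have e1 : f k = (N.choose k : ℝ) * q * (pr ^ k * q ^ (N - (k + 1))) := by
        rw [hf]; simp only; rw [e, pow_succ]; ring
      have e2 : f (k + 1) = (N.choose (k + 1) : ℝ) * pr * (pr ^ k * q ^ (N - (k + 1))) := by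
        rw [hf]; simp only; rw [pow_succ]; ring
      rw [e1, e2]
      exact mul_le_mul_of_nonneg_right keyR (by positivity)
    · have : N.choose (k + 1) = 0 := Nat.choose_eq_zero_of_lt (by omega)
      have e : f (k + 1) = 0 := by rw [hf]; simp only; rw [this]; simp
      rw [e]; exact hf0 k
  -- f k ≤ f n for all k
  have hmax : ∀ k, f k ≤ f n := by
    have down : ∀ d, f (n - d) ≤ f n := by
      intro d
      induction d with
      | zero => simp
      | succ d ih =>
        rcases le_or_gt n (d + 1) with h | h
        · rcases le_or_gt n d with h' | h'
          · have : n - (d + 1) = n - d := by omega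
            rw [this]; exact ih
          · have h0 : n - (d + 1) = 0 := by omega
            have h1 : n - d = 1 := by omega
            have := claim1 0 (by omega)
            rw [h0]; rw [h1] at ih; exact this.trans ih
        · have h1 : (n - (d + 1)) + 1 = n - d := by omega
          have := claim1 (n - (d + 1)) (by omega)
          rw [h1] at this
          exact this.trans ih
    have up : ∀ d, f (n + d) ≤ f n := by
      intro d
      induction d with
      | zero => simp
      | succ d ih =>
        have := claim2 (n + d) (by omega)
        have e : n + (d + 1) = (n + d) + 1 := by omega
        rw [e]
        exact this.trans ih
    intro k
    rcases le_total k n with h | h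
    · have : n - (n - k) = k := by omega
      rw [← this]; exact down (n - k)
    · have : n + (k - n) = k := by omega
      rw [← this]; exact up (k - n)
  -- sum of f over range (N+1) equals 1
  have hsum : ∑ k ∈ Finset.range (N + 1), f k = 1 := by
    have h := add_pow pr q N
    rw [hpq, one_pow] at h
    calc ∑ k ∈ Finset.range (N + 1), f k
        = ∑ k ∈ Finset.range (N + 1), pr ^ k * q ^ (N - k) * (N.choose k : ℝ) := by
          apply Finset.sum_congr rfl
          intro k _
          rw [hf]; simp only; ring
      _ = 1 := h.symm
  constructor
  · have hn_mem : n ∈ Finset.range (N + 1) := Finset.mem_range.2 (by omega)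
    have := Finset.single_le_sum (f := f) (fun i _ => hf0 i) hn_mem
    rw [hsum] at this
    exact this
  · have hle : ∀ k ∈ Finset.range (N + 1), f k ≤ f n := fun k _ => hmax k
    have := Finset.sum_le_card_nsmul _ _ _ hle
    rw [hsum, Finset.card_range] at this
    rw [nsmul_eq_mul] at this
    push_cast at this
    exact this

set_option maxHeartbeats 1000000

/-- For `k = n(m−1)+1`, the coefficients
`p_k = (1/k)((m−1)/m)^k (1/m)^n C(mn, n)` satisfy `0 < p_k ≤ 1`, and the generating
function `∑_n p_{n(m−1)+1} x^{n(m−1)+1}` has radius of convergence exactly `1`: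
it converges for `|x| < 1` and diverges for `|x| > 1`. -/
theorem pcoef_bounds_and_radius (m : ℕ) (hm : 2 ≤ m)
    (p : ℕ → ℝ)
    (hp : ∀ n : ℕ, p n =
      (1 / ((n * (m - 1) + 1 : ℕ) : ℝ)) * (((m : ℝ) - 1) / m) ^ (n * (m - 1) + 1) *
        ((1 : ℝ) / m) ^ n * (Nat.choose (m * n) n : ℝ)) :
    (∀ n : ℕ, 1 ≤ n → 0 < p n ∧ p n ≤ 1) ∧
    (∀ x : ℝ, |x| < 1 → Summable (fun n : ℕ => p n * x ^ (n * (m - 1) + 1))) ∧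
    (∀ x : ℝ, 1 < |x| → ¬ Summable (fun n : ℕ => p n * x ^ (n * (m - 1) + 1))) := by
  have hm0 : (0:ℝ) < m := by positivity
  have hm2 : (2:ℝ) ≤ m := by exact_mod_cast hm
  set q : ℝ := ((m:ℝ) - 1) / m with hqdef
  have hq0 : 0 < q := by rw [hqdef]; exact div_pos (by linarith) hm0
  have hq1 : q ≤ 1 := by rw [hqdef, div_le_one hm0]; linarith
  have hsubeq : ∀ n : ℕ, m * n - n = n * (m - 1) := by
    intro n
    rw [mul_comm n (m - 1), Nat.sub_one_mul]
  have hrep : ∀ n : ℕ, p n = (1 / ((n * (m - 1) + 1 : ℕ) : ℝ)) * q *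
      ((Nat.choose (m * n) n : ℝ) * ((1:ℝ)/m) ^ n * q ^ (m * n - n)) := by
    intro n
    rw [hp n, hsubeq n, pow_succ]
    ring
  have hkpos : ∀ n : ℕ, (0:ℝ) < ((n * (m - 1) + 1 : ℕ) : ℝ) := by
    intro n; exact_mod_cast Nat.succ_pos _
  have hk1 : ∀ n : ℕ, (1:ℝ) ≤ ((n * (m - 1) + 1 : ℕ) : ℝ) := by
    intro n; exact_mod_cast Nat.succ_le_succ (Nat.zero_le _)
  have hCpos : ∀ n : ℕ, (0:ℝ) < (Nat.choose (m * n) n : ℝ) := by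
    intro n
    have : 0 < Nat.choose (m * n) n :=
      Nat.choose_pos (by nlinarith [Nat.le_mul_of_pos_left n (show 0 < m by omega)])
    exact_mod_cast this
  have hBpos : ∀ n : ℕ, (0:ℝ) <
      (Nat.choose (m * n) n : ℝ) * ((1:ℝ)/m) ^ n * q ^ (m * n - n) := by
    intro n
    have := hCpos n
    positivity
  have hbounds : ∀ n : ℕ, 0 < p n ∧ p n ≤ 1 := by
    intro n
    obtain ⟨hB1, _⟩ := binom_term_bounds m n hm
    rw [← hqdef] at hB1
    constructor
    · rw [hrep n]
      have := hBpos n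
      have := hkpos n
      positivity
    · rw [hrep n]
      have h1 : 1 / ((n * (m - 1) + 1 : ℕ) : ℝ) ≤ 1 := by
        rw [div_le_one (hkpos n)]; exact hk1 n
      have h2 : 0 ≤ 1 / ((n * (m - 1) + 1 : ℕ) : ℝ) := by positivity
      calc (1 / ((n * (m - 1) + 1 : ℕ) : ℝ)) * q *
            ((Nat.choose (m * n) n : ℝ) * ((1:ℝ)/m) ^ n * q ^ (m * n - n))
          ≤ 1 * 1 * 1 := by
            apply mul_le_mul (mul_le_mul h1 hq1 hq0.le zero_le_one) hB1 (hBpos n).le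
            norm_num
        _ = 1 := by norm_num
  refine ⟨fun n _ => hbounds n, ?_, ?_⟩
  · -- summability for |x| < 1
    intro x hx
    apply Summable.of_abs
    have hgeom : Summable (fun n : ℕ => |x| * (|x| ^ (m - 1)) ^ n) := by
      apply Summable.mul_left
      apply summable_geometric_of_lt_one (by positivity)
      exact pow_lt_one₀ (abs_nonneg x) hx (by omega)
    apply Summable.of_nonneg_of_le (fun n => abs_nonneg _) _ hgeom
    intro n
    have h1 : |p n * x ^ (n * (m - 1) + 1)| = p n * |x| ^ (n * (m - 1) + 1) := by
      rw [abs_mul, abs_pow, abs_of_nonneg (hbounds n).1.le]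
    rw [h1]
    have h2 : |x| ^ (n * (m - 1) + 1) = |x| * (|x| ^ (m - 1)) ^ n := by
      rw [pow_succ, mul_comm n (m - 1), pow_mul]
      ring
    rw [← h2]
    have h3 : (0:ℝ) ≤ |x| ^ (n * (m - 1) + 1) := by positivity
    nlinarith [(hbounds n).1.le, (hbounds n).2]
  · -- divergence for |x| > 1
    intro x hx hS
    obtain ⟨r, hrdef⟩ : ∃ r : ℝ, r = |x| := ⟨|x|, rfl⟩
    have hr1 : (1:ℝ) < r := hrdef ▸ hx
    have hr0 : (0:ℝ) < r := by linarith
    -- lower bound on p n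
    have hlow : ∀ n : ℕ, q / (((n * (m - 1) + 1 : ℕ) : ℝ) * ((m:ℝ) * n + 1)) ≤ p n := by
      intro n
      obtain ⟨_, hB2⟩ := binom_term_bounds m n hm
      rw [← hqdef] at hB2
      set B := (Nat.choose (m * n) n : ℝ) * ((1:ℝ)/m) ^ n * q ^ (m * n - n) with hBdef
      have hA0 : (0:ℝ) < (m:ℝ) * n + 1 := by positivity
      have hABcast : ((m * n : ℕ) : ℝ) + 1 = (m:ℝ) * n + 1 := by push_cast; ring
      rw [hABcast] at hB2
      have hBge : 1 / ((m:ℝ) * n + 1) ≤ B := by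
        rw [div_le_iff₀ hA0]; linarith
      rw [hrep n, ← hBdef]
      rw [div_le_iff₀ (by positivity)]
      have hk := hkpos n
      have h6 : (1 / ((n * (m - 1) + 1 : ℕ) : ℝ)) * ((n * (m - 1) + 1 : ℕ) : ℝ) = 1 :=
        one_div_mul_cancel (ne_of_gt hk)
      have h7 := mul_le_mul_of_nonneg_left hB2 hq0.le
      rw [mul_one] at h7
      have e : 1 / ((n * (m - 1) + 1 : ℕ) : ℝ) * q * B *
          (((n * (m - 1) + 1 : ℕ) : ℝ) * ((m:ℝ) * n + 1)) =
          q * (((m:ℝ) * n + 1) * B) *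
            ((1 / ((n * (m - 1) + 1 : ℕ) : ℝ)) * ((n * (m - 1) + 1 : ℕ) : ℝ)) := by ring
      rw [e, h6, mul_one]
      exact h7
    -- growth: eventually k*(mn+1) ≤ r^k
    have hgrow : ∀ᶠ n : ℕ in atTop,
        ((n * (m - 1) + 1 : ℕ) : ℝ) * ((m:ℝ) * n + 1) ≤ r ^ (n * (m - 1) + 1) := by
      have hinv : ‖(1/r : ℝ)‖ < 1 := by
        rw [Real.norm_eq_abs, abs_of_pos (by positivity)]
        rw [div_lt_one hr0]; linarith
      have ht := (summable_norm_pow_mul_geometric_of_norm_lt_one 2 hinv).tendsto_atTop_zero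
      have hc : (0:ℝ) < 1 / (4 * (m:ℝ) ^ 2) := by positivity
      filter_upwards [ht.eventually_lt_const hc, eventually_ge_atTop 1] with n hn' hn1
      have hn : (n:ℝ) ^ 2 * (1/r) ^ n < 1 / (4 * (m:ℝ) ^ 2) := by
        have hval : ‖(n:ℝ) ^ 2 * (1/r) ^ n‖ = (n:ℝ) ^ 2 * (1/r) ^ n := by
          rw [Real.norm_eq_abs, abs_of_nonneg (by positivity)]
        rwa [hval] at hn'
      have hn1R : (1:ℝ) ≤ (n:ℝ) := by exact_mod_cast hn1
      have hrn : (0:ℝ) < r ^ n := by positivity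
      have hinvpow : ((1:ℝ)/r) ^ n = 1 / r ^ n := by rw [div_pow, one_pow]
      rw [hinvpow, mul_one_div] at hn
      have key : 4 * (m:ℝ) ^ 2 * (n:ℝ) ^ 2 < r ^ n := by
        have h := (div_lt_div_iff₀ hrn (show (0:ℝ) < 4 * (m:ℝ) ^ 2 by positivity)).1 hn
        nlinarith [h]
      have hkle : ((n * (m - 1) + 1 : ℕ) : ℝ) ≤ (m:ℝ) * n + 1 := by
        have : n * (m - 1) + 1 ≤ m * n + 1 := by
          have h1 : n * (m - 1) ≤ n * m := Nat.mul_le_mul_left n (by omega)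
          have h2 : n * m = m * n := Nat.mul_comm n m
          omega
        calc ((n * (m - 1) + 1 : ℕ) : ℝ) ≤ ((m * n + 1 : ℕ) : ℝ) := by exact_mod_cast this
          _ = (m:ℝ) * n + 1 := by push_cast; ring
      have hsq : ((m:ℝ) * n + 1) * ((m:ℝ) * n + 1) ≤ 4 * (m:ℝ) ^ 2 * (n:ℝ) ^ 2 := by
        have hmn : (2:ℝ) ≤ (m:ℝ) * n := by nlinarith
        nlinarith [sq_nonneg ((m:ℝ) * (n:ℝ) - 1), hmn]
      have hnk : r ^ n ≤ r ^ (n * (m - 1) + 1) := by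
        apply pow_le_pow_right₀ hr1.le
        have : n * 1 ≤ n * (m - 1) := Nat.mul_le_mul_left n (by omega)
        omega
      have hkA0 : (0:ℝ) ≤ ((n * (m - 1) + 1 : ℕ) : ℝ) := (hkpos n).le
      nlinarith [mul_le_mul hkle hkle hkA0 (by positivity : (0:ℝ) ≤ (m:ℝ) * n + 1)]
    -- terms don't go to zero
    have hterm := hS.tendsto_atTop_zero
    have h1 : ∀ᶠ n : ℕ in atTop, |p n * x ^ (n * (m - 1) + 1)| < q := by
      have habs : Tendsto (fun n : ℕ => |p n * x ^ (n * (m - 1) + 1)|) atTop (nhds 0) := by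
        have h0 := hterm.abs
        rwa [abs_zero] at h0
      exact habs.eventually_lt_const hq0
    have h2 : ∀ᶠ n : ℕ in atTop, q ≤ |p n * x ^ (n * (m - 1) + 1)| := by
      filter_upwards [hgrow] with n hg
      have habs : |p n * x ^ (n * (m - 1) + 1)| = p n * r ^ (n * (m - 1) + 1) := by
        rw [abs_mul, abs_pow, abs_of_nonneg (hbounds n).1.le, hrdef]
      rw [habs]
      have hk := hkpos n
      have hA0 : (0:ℝ) < (m:ℝ) * n + 1 := by positivity
      have hrk : (0:ℝ) < r ^ (n * (m - 1) + 1) := by positivity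
      have hl := hlow n
      calc q = q / (((n * (m - 1) + 1 : ℕ) : ℝ) * ((m:ℝ) * n + 1)) *
              (((n * (m - 1) + 1 : ℕ) : ℝ) * ((m:ℝ) * n + 1)) :=
            (div_mul_cancel₀ q (by positivity)).symm
        _ ≤ q / (((n * (m - 1) + 1 : ℕ) : ℝ) * ((m:ℝ) * n + 1)) *
              r ^ (n * (m - 1) + 1) := by
            apply mul_le_mul_of_nonneg_left hg (by positivity)
        _ ≤ p n * r ^ (n * (m - 1) + 1) := by
            apply mul_le_mul_of_nonneg_right hl hrk.le
    obtain ⟨n, hlt, hge⟩ := (h1.and h2).exists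
    linarith
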